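/- arXiv:2403.10329 — 2 statements merged into one kernel-verified Lean document; each statement's English description precedes it below -/
import Mathlib

section
/- For a fixed vector y with strictly positive entries and p > 0, the optimization problem min_x ⟨exp(x), y⟩ subject to ‖x‖₁ ≤ p (where exp is applied entrywise) has a minimizer, and every minimizer x satisfies x ≤ 0 entrywise and ‖x‖₁ = p. -/
theorem gamma_minimizer_properties {n : ℕ} (hn : 0 < n)
    (y : Fin n → ℝ) (hy : ∀ i, 0 < y i) (p : ℝ) (hp : 0 < p)
    (F : (Fin n → ℝ) → ℝ) (hF : ∀ x, F x = ∑ i, Real.exp (x i) * y i) :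
    (∃ x : Fin n → ℝ, (∑ i, |x i|) ≤ p ∧
        ∀ z : Fin n → ℝ, (∑ i, |z i|) ≤ p → F x ≤ F z) ∧
    (∀ x : Fin n → ℝ, (∑ i, |x i|) ≤ p →
        (∀ z : Fin n → ℝ, (∑ i, |z i|) ≤ p → F x ≤ F z) →
        (∀ i, x i ≤ 0) ∧ (∑ i, |x i|) = p) := by
  have hFc : Continuous F := by
    have h : Continuous fun x : Fin n → ℝ => ∑ i, Real.exp (x i) * y i :=
      continuous_finset_sum _ fun i _ =>
        ((Real.continuous_exp.comp (continuous_apply i)).mul continuous_const)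
    have : F = fun x : Fin n → ℝ => ∑ i, Real.exp (x i) * y i := funext hF
    rw [this]; exact h
  have key : ∀ (x : Fin n → ℝ) (i : Fin n) (a : ℝ), a < x i →
      F (Function.update x i a) < F x := by
    intro x i a ha
    rw [hF, hF]
    apply Finset.sum_lt_sum
    · intro j _
      by_cases hj : j = i
      · subst hj
        rw [Function.update_self]
        exact mul_le_mul_of_nonneg_right (Real.exp_le_exp.2 ha.le) (hy j).le
      · rw [Function.update_of_ne hj]
    · exact ⟨i, Finset.mem_univ i, by
        rw [Function.update_self]
        exact mul_lt_mul_of_pos_right (Real.exp_lt_exp.2 ha) (hy i)⟩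
  constructor
  · -- existence of a minimizer
    set S : Set (Fin n → ℝ) := {x | (∑ i, |x i|) ≤ p} with hSdef
    have hne : S.Nonempty := ⟨0, by simp [hSdef, hp.le]⟩
    have hclosed : IsClosed S := by
      have h : Continuous fun x : Fin n → ℝ => ∑ i, |x i| :=
        continuous_finset_sum _ fun i _ => (continuous_apply i).abs
      exact isClosed_le h continuous_const
    have hcomp : IsCompact S := by
      have hsub : S ⊆ Metric.closedBall 0 p := by
        intro x hx
        rw [Metric.mem_closedBall, dist_zero_right]
        rw [pi_norm_le_iff_of_nonneg hp.le]
        intro i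
        calc ‖x i‖ = |x i| := Real.norm_eq_abs _
          _ ≤ ∑ j, |x j| :=
              Finset.single_le_sum (f := fun j => |x j|) (fun j _ => abs_nonneg _)
                (Finset.mem_univ i)
          _ ≤ p := hx
      exact (isCompact_closedBall 0 p).of_isClosed_subset hclosed hsub
    obtain ⟨x, hxS, hmin⟩ := hcomp.exists_isMinOn hne hFc.continuousOn
    exact ⟨x, hxS, fun z hz => hmin hz⟩
  · intro x hx hmin
    have hneg : ∀ i, x i ≤ 0 := by
      intro i
      by_contra h
      push_neg at h
      have hlt := key x i (-(x i)) (by linarith)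
      have hz : (∑ j, |Function.update x i (-(x i)) j|) ≤ p := by
        have habs : ∀ j, |Function.update x i (-(x i)) j| = |x j| := by
          intro j
          by_cases hj : j = i
          · subst hj; simp
          · rw [Function.update_of_ne hj]
        calc (∑ j, |Function.update x i (-(x i)) j|) = ∑ j, |x j| :=
              Finset.sum_congr rfl fun j _ => habs j
          _ ≤ p := hx
      exact absurd (hmin _ hz) (not_le.2 hlt)
    refine ⟨hneg, ?_⟩
    by_contra h
    have hlt' : (∑ i, |x i|) < p := lt_of_le_of_ne hx h
    set ε := p - ∑ i, |x i| with hε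
    have hεpos : 0 < ε := by linarith
    set i0 : Fin n := ⟨0, hn⟩
    have hlt := key x i0 (x i0 - ε) (by linarith)
    have hz : (∑ j, |Function.update x i0 (x i0 - ε) j|) ≤ p := by
      have habs : ∀ j, |Function.update x i0 (x i0 - ε) j|
          = Function.update (fun j => |x j|) i0 (|x i0| + ε) j := by
        intro j
        by_cases hj : j = i0
        · rw [hj, Function.update_self, Function.update_self]
          have h1 : x i0 ≤ 0 := hneg i0
          rw [abs_of_nonpos (by linarith), abs_of_nonpos h1]
          ring
        · rw [Function.update_of_ne hj, Function.update_of_ne hj]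
      have h2 : (∑ j, |Function.update x i0 (x i0 - ε) j|)
          = ∑ j, Function.update (fun j => |x j|) i0 (|x i0| + ε) j :=
        Finset.sum_congr rfl fun j _ => habs j
      rw [h2, Finset.sum_update_of_mem (Finset.mem_univ i0)]
      have h3 : (∑ i, |x i|)
          = |x i0| + ∑ j ∈ Finset.univ \ {i0}, |x j| :=
        Finset.sum_eq_add_sum_sdiff_singleton_of_mem (Finset.mem_univ i0) fun j => |x j|
      linarith
    exact absurd (hmin _ hz) (not_le.2 hlt)
end

section
/- In ℝ³, a source position s is generically identifiable from three TDOA equations ‖s − r_{k_p}‖ − ‖s − r_{ℓ_p}‖ = τ_p, p = 1,2,3, only if the index set {k₁, ℓ₁, k₂, ℓ₂, k₃, ℓ₃} contains at least four distinct indices; equivalently, if only three distinct receivers appear among the three pairs, the three TDOA equations are dependent (one is determined by the other two via the consistency relation), so the solution set, if nonempty and noiseless, is not determined by three independent constraints. -/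
/-- If the three receiver pairs involve only three distinct receivers `a, b, c`, then each
TDOA is a `±1/0`-combination of `τ(s;a,b)` and `τ(s;b,c)`, i.e. the three TDOA equations
are dependent. -/
theorem three_receivers_dependent {R : ℕ} (r : Fin R → EuclideanSpace ℝ (Fin 3))
    (k l : Fin 3 → Fin R) (a b c : Fin R)
    (hkl : ∀ p, k p ∈ ({a, b, c} : Set (Fin R)) ∧ l p ∈ ({a, b, c} : Set (Fin R)))
    (τ : EuclideanSpace ℝ (Fin 3) → Fin R → Fin R → ℝ)
    (hτ : ∀ s i j, τ s i j = ‖s - r i‖ - ‖s - r j‖) :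
    ∀ (s : EuclideanSpace ℝ (Fin 3)) (p : Fin 3),
      ∃ e₁ e₂ : ℝ, e₁ ∈ ({-1, 0, 1} : Set ℝ) ∧ e₂ ∈ ({-1, 0, 1} : Set ℝ) ∧
        τ s (k p) (l p) = e₁ * τ s a b + e₂ * τ s b c := by
  intro s p
  obtain ⟨hk, hl⟩ := hkl p
  simp only [Set.mem_insert_iff, Set.mem_singleton_iff] at hk hl
  rcases hk with hk | hk | hk <;> rcases hl with hl | hl | hl <;> rw [hk, hl]
  · exact ⟨0, 0, by simp, by simp, by simp [hτ]⟩
  · exact ⟨1, 0, by simp, by simp, by simp [hτ]⟩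
  · exact ⟨1, 1, by simp, by simp, by simp [hτ]⟩
  · exact ⟨-1, 0, by simp, by simp, by simp [hτ]⟩
  · exact ⟨0, 0, by simp, by simp, by simp [hτ]⟩
  · exact ⟨0, 1, by simp, by simp, by simp [hτ]⟩
  · exact ⟨-1, -1, by simp, by simp, by simp [hτ]⟩
  · exact ⟨0, -1, by simp, by simp, by simp [hτ]⟩
  · exact ⟨0, 0, by simp, by simp, by simp [hτ]⟩
end
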